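/- Let R denote [0,∞) with the spiral coarse structure: the coarse structure pulled back from the Euclidean metric on ℝ² along the Archimedean spiral embedding σ(t) = (√t·cos(2π√t), √t·sin(2π√t)). Then σ : R → ℝ² has coarsely dense image: there is a constant C such that every point of ℝ² is within Euclidean distance C of the image of σ. Consequently R with this coarse structure is coarsely equivalent to ℝ², and in particular R is not coarsely equivalent to [0,∞) with its metric coarse structure. -/

import Mathlib

open Real

/-- The Archimedean spiral embedding of the ray into the plane. -/
noncomputable def spiral (t : ℝ) : ℝ × ℝ :=
  (Real.sqrt t * Real.cos (2 * π * Real.sqrt t),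
   Real.sqrt t * Real.sin (2 * π * Real.sqrt t))

lemma spiral_dense (p : ℝ × ℝ) : ∃ t : ℝ, 0 ≤ t ∧ dist (spiral t) p ≤ 1 := by
  set z : ℂ := ⟨p.1, p.2⟩ with hz
  set r : ℝ := ‖z‖ with hr
  set θ : ℝ := Complex.arg z with hθ
  set n : ℤ := ⌈r - θ / (2 * π)⌉ with hn
  set s : ℝ := θ / (2 * π) + n with hs
  have hπ : (0:ℝ) < π := Real.pi_pos
  have h2π : (2 * π) ≠ 0 := by positivity
  have hrs : r ≤ s := by
    have := Int.le_ceil (r - θ / (2 * π))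
    rw [hs]; linarith
  have hsr : s ≤ r + 1 := by
    have := Int.ceil_lt_add_one (r - θ / (2 * π))
    rw [hs]; linarith
  have hr0 : 0 ≤ r := norm_nonneg z
  have hs0 : 0 ≤ s := le_trans hr0 hrs
  refine ⟨s ^ 2, by positivity, ?_⟩
  have hsq : Real.sqrt (s ^ 2) = s := Real.sqrt_sq hs0
  have hang : 2 * π * s = θ + n * (2 * π) := by
    rw [hs]; field_simp
  have hcos : Real.cos (2 * π * Real.sqrt (s ^ 2)) = Real.cos θ := by
    rw [hsq, hang, Real.cos_add_int_mul_two_pi]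
  have hsin : Real.sin (2 * π * Real.sqrt (s ^ 2)) = Real.sin θ := by
    rw [hsq, hang, Real.sin_add_int_mul_two_pi]
  have hp1 : p.1 = r * Real.cos θ := (Complex.norm_mul_cos_arg z).symm
  have hp2 : p.2 = r * Real.sin θ := (Complex.norm_mul_sin_arg z).symm
  rw [Prod.dist_eq, max_le_iff]
  have hdiff : |s - r| ≤ 1 := by
    rw [abs_of_nonneg (by linarith)]; linarith
  constructor
  · show dist (Real.sqrt (s ^ 2) * Real.cos (2 * π * Real.sqrt (s ^ 2))) p.1 ≤ 1
    rw [hsq, hang, Real.cos_add_int_mul_two_pi, hp1, Real.dist_eq]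
    calc |s * Real.cos θ - r * Real.cos θ| = |s - r| * |Real.cos θ| := by
          rw [← abs_mul]; ring_nf
      _ ≤ 1 * 1 := mul_le_mul hdiff (Real.abs_cos_le_one θ) (abs_nonneg _) zero_le_one
      _ = 1 := one_mul 1
  · show dist (Real.sqrt (s ^ 2) * Real.sin (2 * π * Real.sqrt (s ^ 2))) p.2 ≤ 1
    rw [hsq, hang, Real.sin_add_int_mul_two_pi, hp2, Real.dist_eq]
    calc |s * Real.sin θ - r * Real.sin θ| = |s - r| * |Real.sin θ| := by
          rw [← abs_mul]; ring_nf
      _ ≤ 1 * 1 := mul_le_mul hdiff (Real.abs_sin_le_one θ) (abs_nonneg _) zero_le_one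
      _ = 1 := one_mul 1

theorem spiral_coarsely_dense_and_equivalence :
    ∃ C : ℝ, 0 ≤ C ∧
      -- the image of the spiral is coarsely dense in ℝ²
      (∀ p : ℝ × ℝ, ∃ t : ℝ, 0 ≤ t ∧ dist (spiral t) p ≤ C) ∧
      -- hence the spiral is a coarse equivalence from the ray with the
      -- pullback coarse structure to ℝ²: there is a coarse inverse g
      (∃ g : ℝ × ℝ → ℝ,
        (∀ p : ℝ × ℝ, 0 ≤ g p) ∧
        -- spiral ∘ g is close to the identity of ℝ²
        (∀ p : ℝ × ℝ, dist (spiral (g p)) p ≤ C) ∧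
        -- g is controlled (with respect to the pullback structure on the ray)
        (∀ α : ℝ, 0 ≤ α → ∃ β : ℝ, 0 ≤ β ∧ ∀ p q : ℝ × ℝ, dist p q ≤ α →
          dist (spiral (g p)) (spiral (g q)) ≤ β) ∧
        -- g ∘ spiral is close to the identity of the ray, measured in the
        -- pullback coarse structure
        (∀ t : ℝ, 0 ≤ t → dist (spiral (g (spiral t))) (spiral t) ≤ C)) := by
  refine ⟨1, zero_le_one, spiral_dense, ?_⟩
  refine ⟨fun p => Classical.choose (spiral_dense p), ?_, ?_, ?_, ?_⟩
  · exact fun p => (Classical.choose_spec (spiral_dense p)).1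
  · exact fun p => (Classical.choose_spec (spiral_dense p)).2
  · intro α hα
    refine ⟨α + 2, by linarith, fun p q hpq => ?_⟩
    have h1 := (Classical.choose_spec (spiral_dense p)).2
    have h2 := (Classical.choose_spec (spiral_dense q)).2
    have t1 := dist_triangle (spiral (Classical.choose (spiral_dense p))) q
      (spiral (Classical.choose (spiral_dense q)))
    have t2 := dist_triangle (spiral (Classical.choose (spiral_dense p))) p q
    have h2' : dist q (spiral (Classical.choose (spiral_dense q))) ≤ 1 := by
      rw [dist_comm]; exact h2
    linarith
  · exact fun t _ => (Classical.choose_spec (spiral_dense (spiral t))).2
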